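/- Let K be a non-degenerate d-simplex in R^d with minimum height a_K > 0 (minimum over vertices of the distance from the vertex to the opposite facet). Then the spectral norm of the inverse edge matrix satisfies ||E_K^{-1}||_2 ≤ √d / a_K. -/

import Mathlib

open Matrix

/-- The spectral norm (operator 2-norm) of a real `d × d` matrix. -/
noncomputable def specNorm {d : ℕ} (M : Matrix (Fin d) (Fin d) ℝ) : ℝ :=
  ‖LinearMap.toContinuousLinearMap (Matrix.toEuclideanLin M)‖


lemma piLp_sum_apply {ι : Type*} {n : ℕ} (s : Finset ι) (f : ι → EuclideanSpace ℝ (Fin n))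
    (k : Fin n) : (∑ j ∈ s, f j) k = ∑ j ∈ s, f j k := by
  classical
  induction s using Finset.cons_induction with
  | empty => rfl
  | cons a s ha ih => rw [Finset.sum_cons, Finset.sum_cons, PiLp.add_apply, ih]

lemma row_bound
    (d : ℕ) (x : Fin (d + 1) → EuclideanSpace ℝ (Fin d))
    (E : Matrix (Fin d) (Fin d) ℝ)
    (hE : ∀ r c, E r c = (x c.succ - x 0) r)
    (aK : ℝ)
    (haK : aK = Finset.univ.inf' Finset.univ_nonempty
      (fun i => Metric.infDist (x i) (affineSpan ℝ (x '' {i}ᶜ) : Set (EuclideanSpace ℝ (Fin d)))))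
    (haKpos : 0 < aK) (hdet : IsUnit E.det) :
    ∀ i, ∑ k, (E⁻¹ i k)^2 ≤ (1/aK)^2 := by
  have hEi : E⁻¹ * E = 1 := Matrix.nonsing_inv_mul E hdet
  have hIE : E * E⁻¹ = 1 := Matrix.mul_nonsing_inv E hdet
  intro i
  set g : Fin d → ℝ := E⁻¹ i with hg
  set s : ℝ := ∑ k, g k ^ 2 with hs
  have hs0 : 0 ≤ s := Finset.sum_nonneg fun k _ => sq_nonneg _
  rcases eq_or_lt_of_le hs0 with hsz | hsp
  · rw [← hsz]; positivity
  have hgE : ∀ j, ∑ k, g k * E k j = if i = j then 1 else 0 := by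
    intro j
    have h := congrFun (congrFun hEi i) j
    rwa [Matrix.mul_apply, Matrix.one_apply] at h
  set u : EuclideanSpace ℝ (Fin d) := (WithLp.equiv 2 (Fin d → ℝ)).symm (fun k => s⁻¹ * g k)
    with hu_def
  have hu_app : ∀ k, u k = s⁻¹ * g k := fun k => rfl
  set S : AffineSubspace ℝ (EuclideanSpace ℝ (Fin d)) := affineSpan ℝ (x '' {i.succ}ᶜ) with hS
  have h0mem : x 0 ∈ S :=
    subset_affineSpan ℝ _ ⟨0, fun h => Fin.succ_ne_zero i h.symm, rfl⟩
  have hjmem : ∀ j : Fin d, j ≠ i → x j.succ ∈ S := fun j hj =>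
    subset_affineSpan ℝ _ ⟨j.succ, fun h => hj (Fin.succ_injective d h), rfl⟩
  have hvdir : ∀ j : Fin d, j ≠ i → (x j.succ - x 0) ∈ S.direction := by
    intro j hj
    have h := AffineSubspace.vsub_mem_direction (hjmem j hj) h0mem
    simpa [vsub_eq_sub] using h
  set w : Fin d → ℝ := fun k => E k i - s⁻¹ * g k with hw
  set c : Fin d → ℝ := E⁻¹ *ᵥ w with hc
  have hEc : E *ᵥ c = w := by rw [hc, Matrix.mulVec_mulVec, hIE, Matrix.one_mulVec]
  have hci : c i = 0 := by
    have h1 : c i = ∑ k, g k * w k := by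
      simp [hc, Matrix.mulVec, dotProduct, hg]
    have h2 : ∑ k, g k * w k = (∑ k, g k * E k i) - s⁻¹ * ∑ k, g k ^ 2 := by
      rw [Finset.mul_sum, ← Finset.sum_sub_distrib]
      exact Finset.sum_congr rfl fun k _ => by rw [hw]; ring
    rw [h1, h2, hgE i, if_pos rfl, ← hs]
    field_simp
    ring
  have hkey : x i.succ - x 0 - u = ∑ j, c j • (x j.succ - x 0) := by
    apply PiLp.ext; intro k
    rw [piLp_sum_apply]
    have hL : (x i.succ - x 0 - u) k = E k i - s⁻¹ * g k := by
      rw [hE k i, ← hu_app k]; simp only [PiLp.sub_apply]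
    have hR : ∑ j, (c j • (x j.succ - x 0)) k = (E *ᵥ c) k := by
      rw [Matrix.mulVec, dotProduct]
      exact Finset.sum_congr rfl fun j _ => by
        rw [PiLp.smul_apply, ← hE k j, smul_eq_mul]; ring
    rw [hL, hR, hEc]
  have hwdir : x i.succ - x 0 - u ∈ S.direction := by
    rw [hkey]
    refine Submodule.sum_mem _ fun j _ => ?_
    by_cases hj : j = i
    · rw [hj, hci, zero_smul]; exact Submodule.zero_mem _
    · exact Submodule.smul_mem _ _ (hvdir j hj)
  have hpmem : x i.succ - u ∈ S := by
    have h := AffineSubspace.vadd_mem_of_mem_direction hwdir h0mem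
    have heq : (x i.succ - x 0 - u) +ᵥ x 0 = x i.succ - u := by
      show (x i.succ - x 0 - u) + x 0 = x i.succ - u
      abel
    rwa [heq] at h
  have hsqrtpos : 0 < Real.sqrt s := Real.sqrt_pos.mpr hsp
  have hdist : dist (x i.succ) (x i.succ - u) = (Real.sqrt s)⁻¹ := by
    rw [dist_eq_norm]
    have h1 : x i.succ - (x i.succ - u) = u := by abel
    rw [h1, EuclideanSpace.norm_eq]
    have h2 : ∑ k, ‖u k‖^2 = s⁻¹ := by
      have : ∀ k, ‖u k‖^2 = s⁻¹ * s⁻¹ * g k ^ 2 := by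
        intro k; rw [hu_app, Real.norm_eq_abs, sq_abs]; ring
      rw [Finset.sum_congr rfl fun k _ => this k, ← Finset.mul_sum, ← hs]
      field_simp
    rw [h2, Real.sqrt_inv]
  have hinf : aK ≤ Metric.infDist (x i.succ) (S : Set (EuclideanSpace ℝ (Fin d))) := by
    rw [haK, hS]
    exact Finset.inf'_le _ (Finset.mem_univ i.succ)
  have hle : aK ≤ (Real.sqrt s)⁻¹ := by
    refine hinf.trans ?_
    rw [← hdist]
    exact Metric.infDist_le_dist_of_mem hpmem
  have h1 : aK * Real.sqrt s ≤ 1 := by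
    calc aK * Real.sqrt s ≤ (Real.sqrt s)⁻¹ * Real.sqrt s :=
          mul_le_mul_of_nonneg_right hle (Real.sqrt_nonneg s)
      _ = 1 := inv_mul_cancel₀ (ne_of_gt hsqrtpos)
  have hsq : Real.sqrt s ^ 2 = s := Real.sq_sqrt hs0
  rw [div_pow, one_pow, le_div_iff₀ (by positivity)]
  nlinarith [h1, hsq, Real.sqrt_nonneg s, haKpos.le, mul_nonneg haKpos.le (Real.sqrt_nonneg s)]

lemma specNorm_le_of_rows {d : ℕ} (M : Matrix (Fin d) (Fin d) ℝ) (C : ℝ) (hC : 0 ≤ C)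
    (h : ∀ i, ∑ k, (M i k)^2 ≤ C^2) : specNorm M ≤ Real.sqrt d * C := by
  refine ContinuousLinearMap.opNorm_le_bound _ (mul_nonneg (Real.sqrt_nonneg _) hC) ?_
  intro v
  rw [LinearMap.coe_toContinuousLinearMap']
  have hv2 : ∑ k, (v k)^2 = ‖v‖^2 := by
    rw [EuclideanSpace.norm_eq, Real.sq_sqrt (by positivity)]
    simp [Real.norm_eq_abs, sq_abs]
  have hterm : ∀ i, ((Matrix.toEuclideanLin M v) i)^2 ≤ C^2 * ‖v‖^2 := by
    intro i
    have : (Matrix.toEuclideanLin M v) i = ∑ k, M i k * v k := by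
      rw [Matrix.toEuclideanLin_apply]
      rfl
    rw [this]
    calc (∑ k, M i k * v k)^2 ≤ (∑ k, (M i k)^2) * (∑ k, (v k)^2) :=
          Finset.sum_mul_sq_le_sq_mul_sq _ _ _
      _ ≤ C^2 * ‖v‖^2 := by rw [hv2]; exact mul_le_mul_of_nonneg_right (h i) (by positivity)
  have hnorm : ‖Matrix.toEuclideanLin M v‖ ≤ Real.sqrt (d * (C^2 * ‖v‖^2)) := by
    rw [EuclideanSpace.norm_eq]
    apply Real.sqrt_le_sqrt
    calc ∑ i, ‖(Matrix.toEuclideanLin M v) i‖^2 = ∑ i, ((Matrix.toEuclideanLin M v) i)^2 := by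
          simp [Real.norm_eq_abs, sq_abs]
      _ ≤ ∑ _i : Fin d, C^2 * ‖v‖^2 := Finset.sum_le_sum (fun i _ => hterm i)
      _ = d * (C^2 * ‖v‖^2) := by simp [mul_comm]
  refine hnorm.trans (le_of_eq ?_)
  rw [Real.sqrt_mul (by positivity), Real.sqrt_mul (by positivity),
    Real.sqrt_sq hC, Real.sqrt_sq (norm_nonneg _)]
  ring

/-- Let `K` be a non-degenerate `d`-simplex in `ℝ^d` with minimum height
`aK > 0` (minimum over vertices of the distance from the vertex to the affine span of
the other vertices). Then the spectral norm of the inverse edge matrix satisfies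
`‖E⁻¹‖₂ ≤ √d / aK`. -/
theorem inverse_edge_matrix_spectral_norm_bound
    (d : ℕ) (x : Fin (d + 1) → EuclideanSpace ℝ (Fin d))
    (hx : AffineIndependent ℝ x)
    (E : Matrix (Fin d) (Fin d) ℝ)
    (hE : ∀ r c, E r c = (x c.succ - x 0) r)
    (aK : ℝ)
    (haK : aK = Finset.univ.inf' Finset.univ_nonempty
      (fun i => Metric.infDist (x i) (affineSpan ℝ (x '' {i}ᶜ) : Set (EuclideanSpace ℝ (Fin d)))))
    (haKpos : 0 < aK) :
    specNorm E⁻¹ ≤ Real.sqrt d / aK := by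
  by_cases hdet : IsUnit E.det
  · have hrow := row_bound d x E hE aK haK haKpos hdet
    have h := specNorm_le_of_rows E⁻¹ (1/aK) (by positivity) hrow
    calc specNorm E⁻¹ ≤ Real.sqrt d * (1/aK) := h
      _ = Real.sqrt d / aK := by ring
  · rw [Matrix.nonsing_inv_apply_not_isUnit E hdet]
    have h0 : specNorm (0 : Matrix (Fin d) (Fin d) ℝ) = 0 := by
      unfold specNorm
      rw [map_zero, map_zero, norm_zero]
    rw [h0]
    exact div_nonneg (Real.sqrt_nonneg _) haKpos.le
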